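/- Let Y be a normed space and let P : Y → Y be a bounded linear projection (P² = P), P ≠ 0, whose range Z = P(Y) is a finite-dimensional subspace. Then ‖I − P‖ ≤ min(1 + ‖P‖^{-1}, δ_{Y,2}²) · ‖P‖, where the operator norms are taken on Y. -/

import Mathlib

open scoped BigOperators ENNReal NNReal
open Metric Set MeasureTheory

noncomputable section

/-- Closed symmetric convex hull of `K`. -/
def symConvHull {X : Type*} [NormedAddCommGroup X] [NormedSpace ℝ X] (K : Set X) : Set X :=
  closure (convexHull ℝ (K ∪ -K))

/-- Entropy numbers: minimal radius so that `A` is covered by `2^n` balls. -/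
def entropyNum {X : Type*} [NormedAddCommGroup X] (n : ℕ) (A : Set X) : ℝ :=
  sInf {ε : ℝ | 0 < ε ∧ ∃ C : Finset X, C.card ≤ 2 ^ n ∧ A ⊆ ⋃ c ∈ C, Metric.closedBall c ε}

/-- `δ_{X,n}`: supremum over all `n`-dimensional subspaces of `X` of the Banach–Mazur
distance to `ℓ₂ⁿ`. -/
def deltaBM (X : Type*) [NormedAddCommGroup X] [NormedSpace ℝ X] (n : ℕ) : ℝ :=
  ⨆ Y : {Y : Submodule ℝ X // Module.finrank ℝ Y = n},
    ⨅ T : (Y.1 ≃L[ℝ] EuclideanSpace ℝ (Fin n)),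
      ‖T.toContinuousLinearMap‖ * ‖T.symm.toContinuousLinearMap‖

/-- Volume of the unit Euclidean ball in `ℝⁿ`. -/
def volBall (n : ℕ) : ℝ := Real.pi ^ ((n : ℝ) / 2) / Real.Gamma ((n : ℝ) / 2 + 1)

/-- Modulus of smoothness of a normed space `X`. -/
def modSmooth (X : Type*) [NormedAddCommGroup X] (t : ℝ) : ℝ :=
  sSup {r : ℝ | ∃ x y : X, ‖x‖ = 1 ∧ ‖y‖ = t ∧ r = ‖x + y‖ / 2 + ‖x - y‖ / 2 - 1}

/-- The set of ℓ¹-costs of expansions `f = Σ aᵢ gᵢ` with `gᵢ ∈ K`;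
its infimum is `‖f‖_{L1(K)}`. -/
def expanSums {X : Type*} [NormedAddCommGroup X] [NormedSpace ℝ X] (K : Set X) (f : X) :
    Set ℝ :=
  {c | ∃ (a : ℕ → ℝ) (g : ℕ → X), (∀ i, g i ∈ K) ∧
    HasSum (fun i => a i • g i) f ∧ HasSum (fun i => |a i|) c}

/-- The K-functional between `X` and `L1(K)`. -/
def Kfunctional {X : Type*} [NormedAddCommGroup X] [NormedSpace ℝ X] (K : Set X) (t : ℝ)
    (g : X) : ℝ :=
  sInf {r : ℝ | ∃ h : X, (expanSums K h).Nonempty ∧ r = ‖g - h‖ + t * sInf (expanSums K h)}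

/-- The set whose supremum is the interpolation norm `‖g‖_θ`. -/
def thetaSet {X : Type*} [NormedAddCommGroup X] [NormedSpace ℝ X] (K : Set X) (θ : ℝ)
    (g : X) : Set ℝ :=
  {r | ∃ t : ℝ, 0 < t ∧ r = t ^ (-θ) * Kfunctional K t g}



open RealInnerProductSpace Module in

lemma kato2 {E : Type*} [NormedAddCommGroup E] [InnerProductSpace ℝ E]
    (Q : E →L[ℝ] E) (u v : E) (hu0 : u ≠ 0) (hv0 : v ≠ 0)
    (hQu : Q u = u) (hQv : Q v = 0)
    (hspan : ∀ x : E, ∃ a b : ℝ, x = a • u + b • v) :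
    ‖ContinuousLinearMap.id ℝ E - Q‖ ≤ ‖Q‖ := by
  -- independence
  have hdep : ∀ a b : ℝ, a • u + b • v = 0 → a = 0 ∧ b = 0 := by
    intro a b hab
    have h1 : a • u = 0 := by
      have := congrArg Q hab
      simpa [map_add, _root_.map_smul, hQu, hQv] using this
    have ha : a = 0 := (smul_eq_zero.mp h1).resolve_right hu0
    refine ⟨ha, ?_⟩
    rw [ha, zero_smul, zero_add] at hab
    exact (smul_eq_zero.mp hab).resolve_right hv0
  -- strict Cauchy-Schwarz
  have h1 : ⟪u, v⟫ < ‖u‖ * ‖v‖ := by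
    apply inner_lt_norm_mul_iff_real.mpr
    intro h
    have := hdep ‖v‖ (-‖u‖) (by rw [neg_smul, ← h]; abel)
    exact hv0 (norm_eq_zero.mp this.1)
  have h2 : -(‖u‖ * ‖v‖) < ⟪u, v⟫ := by
    have h2' : ⟪u, -v⟫ < ‖u‖ * ‖-v‖ := by
      apply inner_lt_norm_mul_iff_real.mpr
      intro h
      rw [norm_neg, smul_neg] at h
      have := hdep ‖v‖ ‖u‖ (by rw [← neg_eq_iff_eq_neg.mpr h]; abel)
      exact hv0 (norm_eq_zero.mp this.1)
    rw [norm_neg, inner_neg_right] at h2'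
    linarith
  set c : ℝ := ⟪u, v⟫ with hc
  set G : ℝ := ‖u‖ ^ 2 * ‖v‖ ^ 2 - c ^ 2 with hGdef
  have hG : 0 < G := by nlinarith [norm_nonneg u, norm_nonneg v]
  set n : E := ‖v‖ ^ 2 • u - c • v with hn
  set m : E := ‖u‖ ^ 2 • v - c • u with hm
  have hun : ⟪u, n⟫ = G := by
    rw [hn, inner_sub_right, real_inner_smul_right, real_inner_smul_right,
      real_inner_self_eq_norm_sq, ← hc, hGdef]
    ring
  have hvn : ⟪v, n⟫ = 0 := by
    rw [hn, inner_sub_right, real_inner_smul_right, real_inner_smul_right,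
      real_inner_self_eq_norm_sq, real_inner_comm u v, ← hc]
    ring
  have hum : ⟪u, m⟫ = 0 := by
    rw [hm, inner_sub_right, real_inner_smul_right, real_inner_smul_right,
      real_inner_self_eq_norm_sq, ← hc]
    ring
  have hvm : ⟪v, m⟫ = G := by
    rw [hm, inner_sub_right, real_inner_smul_right, real_inner_smul_right,
      real_inner_self_eq_norm_sq, real_inner_comm u v, ← hc, hGdef]
    ring
  have hn2 : ‖n‖ ^ 2 = ‖v‖ ^ 2 * G := by
    rw [← real_inner_self_eq_norm_sq]
    rw [hn, inner_sub_left, real_inner_smul_left, real_inner_smul_left]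
    rw [← hn, hun, hvn]
    ring
  have hm2 : ‖m‖ ^ 2 = ‖u‖ ^ 2 * G := by
    rw [← real_inner_self_eq_norm_sq]
    rw [hm, inner_sub_left, real_inner_smul_left, real_inner_smul_left]
    rw [← hm, hvm, hum]
    ring
  -- formulas
  have hQform : ∀ x : E, Q x = (⟪x, n⟫ / G) • u := by
    intro x
    obtain ⟨a, b, rfl⟩ := hspan x
    rw [inner_add_left, real_inner_smul_left, real_inner_smul_left, hun, hvn]
    rw [map_add, _root_.map_smul, _root_.map_smul, hQu, hQv, smul_zero, add_zero]
    congr 1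
    field_simp
    ring
  have hIQform : ∀ x : E, x - Q x = (⟪x, m⟫ / G) • v := by
    intro x
    obtain ⟨a, b, rfl⟩ := hspan x
    rw [inner_add_left, real_inner_smul_left, real_inner_smul_left, hum, hvm]
    rw [map_add, _root_.map_smul, _root_.map_smul, hQu, hQv, smul_zero, add_zero]
    rw [add_sub_cancel_left]
    congr 1
    field_simp
    ring
  -- lower bound on ‖Q‖
  have hnpos : 0 < ‖n‖ := by
    rw [norm_pos_iff]
    intro h
    rw [h, inner_zero_right] at hun
    exact (ne_of_gt hG) hun.symm
  have hQlow : ‖n‖ * ‖u‖ / G ≤ ‖Q‖ := by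
    have h1 : Q n = (‖n‖ ^ 2 / G) • u := by
      rw [hQform n, real_inner_self_eq_norm_sq]
    have h2 : ‖Q n‖ = ‖n‖ ^ 2 / G * ‖u‖ := by
      rw [h1, norm_smul, Real.norm_eq_abs, abs_of_nonneg (by positivity)]
    have h3 := Q.le_opNorm n
    rw [h2] at h3
    have h4 : ‖n‖ ^ 2 * ‖u‖ ≤ ‖Q‖ * ‖n‖ * G := by
      rw [div_mul_eq_mul_div, div_le_iff₀ hG] at h3
      linarith
    rw [div_le_iff₀ hG]
    nlinarith [hnpos]
  -- upper bound on ‖I - Q‖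
  have hIQ : ‖ContinuousLinearMap.id ℝ E - Q‖ ≤ ‖m‖ * ‖v‖ / G := by
    apply ContinuousLinearMap.opNorm_le_bound _ (by positivity)
    intro x
    have h1 : (ContinuousLinearMap.id ℝ E - Q) x = x - Q x := by
      simp [ContinuousLinearMap.sub_apply]
    rw [h1, hIQform x, norm_smul, Real.norm_eq_abs, abs_div, abs_of_nonneg hG.le]
    have h2 : |⟪x, m⟫| ≤ ‖x‖ * ‖m‖ := abs_real_inner_le_norm x m
    rw [div_mul_eq_mul_div, div_mul_eq_mul_div, div_le_div_iff₀ hG hG]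
    nlinarith [h2, hG.le, norm_nonneg v, norm_nonneg x, abs_nonneg (⟪x, m⟫),
      mul_nonneg (norm_nonneg v) hG.le]
  -- combine
  have hmv : ‖m‖ * ‖v‖ = ‖n‖ * ‖u‖ := by
    have h1 : (‖m‖ * ‖v‖) ^ 2 = (‖n‖ * ‖u‖) ^ 2 := by
      rw [mul_pow, mul_pow, hn2, hm2]; ring
    have h2 := (sq_eq_sq_iff_abs_eq_abs (‖m‖ * ‖v‖) (‖n‖ * ‖u‖)).mp h1
    rwa [abs_of_nonneg (by positivity), abs_of_nonneg (by positivity)] at h2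
  rw [hmv] at hIQ
  linarith


lemma coord_le_norm (y : EuclideanSpace ℝ (Fin 2)) (i : Fin 2) : |y i| ≤ ‖y‖ := by
  rw [EuclideanSpace.norm_eq]
  have h1 : |y i| = Real.sqrt (‖y i‖ ^ 2) := by
    rw [Real.sqrt_sq_eq_abs, Real.norm_eq_abs, abs_abs]
  rw [h1]
  apply Real.sqrt_le_sqrt
  apply Finset.single_le_sum (f := fun j => ‖y j‖ ^ 2) (fun j _ => by positivity)
    (Finset.mem_univ i)

set_option synthInstance.maxHeartbeats 1000000 in
set_option maxHeartbeats 1000000 in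
lemma exists_T {E : Type*} [NormedAddCommGroup E] [NormedSpace ℝ E]
    (hE : Module.finrank ℝ E = 2) :
    ∃ T : E ≃L[ℝ] EuclideanSpace ℝ (Fin 2),
      ‖T.toContinuousLinearMap‖ * ‖T.symm.toContinuousLinearMap‖ ≤ 6 := by
  have hfd : FiniteDimensional ℝ E := Module.finite_of_finrank_eq_succ hE
  have hnt : Nontrivial E := Module.nontrivial_of_finrank_eq_succ hE
  obtain ⟨x₁, hx₁⟩ : ∃ x : E, ‖x‖ = 1 := by
    obtain ⟨x₀, hx₀⟩ := exists_ne (0 : E)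
    exact ⟨‖x₀‖⁻¹ • x₀, by
      rw [norm_smul, norm_inv, norm_norm, inv_mul_cancel₀ (norm_ne_zero_iff.mpr hx₀)]⟩
  have hx₁0 : x₁ ≠ 0 := by intro h; rw [h, norm_zero] at hx₁; norm_num at hx₁
  obtain ⟨g, hg1, hgx⟩ := exists_dual_vector ℝ x₁ (norm_ne_zero_iff.mpr hx₁0)
  have hgx1 : g x₁ = 1 := by rw [hgx, hx₁]; norm_num
  -- find x₂ in ker g
  have hginj : ¬ Function.Injective g := by
    intro hinj
    have := LinearMap.finrank_le_finrank_of_injective (f := (g : E →ₗ[ℝ] ℝ)) hinj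
    rw [hE, Module.finrank_self] at this
    omega
  rw [Function.not_injective_iff] at hginj
  obtain ⟨x₂, hx₂, hgx₂, hx₂0⟩ : ∃ x : E, ‖x‖ = 1 ∧ g x = 0 ∧ x ≠ 0 := by
    obtain ⟨a, b, hab, hne⟩ := hginj
    have hx₂'0 : a - b ≠ 0 := sub_ne_zero.mpr hne
    refine ⟨‖a - b‖⁻¹ • (a - b), ?_, ?_, ?_⟩
    · rw [norm_smul, norm_inv, norm_norm, inv_mul_cancel₀ (norm_ne_zero_iff.mpr hx₂'0)]
    · rw [_root_.map_smul, map_sub, hab, sub_self, smul_zero]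
    · exact smul_ne_zero (inv_ne_zero (norm_ne_zero_iff.mpr hx₂'0)) hx₂'0
  obtain ⟨f₂, hf21, hf2x⟩ := exists_dual_vector ℝ x₂ (norm_ne_zero_iff.mpr hx₂0)
  obtain ⟨g₂, hg₂x₁, hg₂x₂, hg₂norm⟩ :
      ∃ g₂ : E →L[ℝ] ℝ, g₂ x₁ = 0 ∧ g₂ x₂ = 1 ∧ ‖g₂‖ ≤ 2 := by
    refine ⟨f₂ - (f₂ x₁) • g, by simp [hgx1], ?_, ?_⟩
    · have h : f₂ x₂ = 1 := by rw [hf2x, hx₂]; norm_num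
      simp [h, hgx₂]
    · have h := f₂.le_opNorm x₁
      rw [hf21, hx₁, one_mul] at h
      calc ‖f₂ - f₂ x₁ • g‖ ≤ ‖f₂‖ + ‖f₂ x₁ • g‖ := norm_sub_le _ _
      _ ≤ ‖f₂‖ + ‖f₂ x₁‖ * ‖g‖ := add_le_add le_rfl (norm_smul_le (f₂ x₁) g)
      _ ≤ 2 := by rw [hf21, hg1, mul_one]; linarith
  -- the linear map from ℓ₂² to E
  set M : EuclideanSpace ℝ (Fin 2) →ₗ[ℝ] E :=
    { toFun := fun y => y 0 • x₁ + y 1 • x₂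
      map_add' := fun y z => by
        show (y + z) 0 • x₁ + (y + z) 1 • x₂ = _
        simp [add_smul]
        abel
      map_smul' := fun c y => by
        show (c • y) 0 • x₁ + (c • y) 1 • x₂ = _
        simp [smul_smul, smul_add] } with hMdef
  have hMapp : ∀ y : EuclideanSpace ℝ (Fin 2), M y = y 0 • x₁ + y 1 • x₂ := fun y => rfl
  have hgM : ∀ y : EuclideanSpace ℝ (Fin 2), g (M y) = y 0 := by
    intro y
    rw [hMapp, map_add, _root_.map_smul, _root_.map_smul, hgx1, hgx₂]
    simp
  have hg₂M : ∀ y : EuclideanSpace ℝ (Fin 2), g₂ (M y) = y 1 := by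
    intro y
    rw [hMapp, map_add, _root_.map_smul, _root_.map_smul, hg₂x₁, hg₂x₂]
    simp
  have hker : ∀ y, M y = 0 → y = 0 := by
    intro y hy
    have h0 : y 0 = 0 := by rw [← hgM y, hy, map_zero]
    have h1 : y 1 = 0 := by rw [← hg₂M y, hy, map_zero]
    ext i
    fin_cases i
    · exact h0
    · exact h1
  have hMinj : Function.Injective M := by
    intro y z h
    have : M (y - z) = 0 := by rw [map_sub, h, sub_self]
    have := hker _ this
    exact sub_eq_zero.mp this
  have hMsurj : Function.Surjective M :=
    (LinearMap.injective_iff_surjective_of_finrank_eq_finrank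
      (by rw [finrank_euclideanSpace_fin, hE])).mp hMinj
  set e : EuclideanSpace ℝ (Fin 2) ≃ₗ[ℝ] E := LinearEquiv.ofBijective M ⟨hMinj, hMsurj⟩ with hedef
  set T : E ≃L[ℝ] EuclideanSpace ℝ (Fin 2) := e.toContinuousLinearEquiv.symm with hTdef
  have hTsymm : ∀ y, T.symm y = M y := fun y => rfl
  have hMT : ∀ x : E, M (T x) = x := by
    intro x
    have := T.symm_apply_apply x
    rw [hTsymm] at this
    exact this
  have hT0 : ∀ x : E, (T x) 0 = g x := by
    intro x
    conv_rhs => rw [← hMT x]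
    rw [hgM]
  have hT1 : ∀ x : E, (T x) 1 = g₂ x := by
    intro x
    conv_rhs => rw [← hMT x]
    rw [hg₂M]
  refine ⟨T, ?_⟩
  have hTbound : ‖T.toContinuousLinearMap‖ ≤ 3 := by
    apply ContinuousLinearMap.opNorm_le_bound _ (by norm_num)
    intro x
    show ‖T x‖ ≤ 3 * ‖x‖
    rw [EuclideanSpace.norm_eq]
    have e0 : ‖(T x) 0‖ ≤ ‖x‖ := by
      rw [hT0, Real.norm_eq_abs]
      have := g.le_opNorm x
      rwa [hg1, one_mul] at this
    have e1 : ‖(T x) 1‖ ≤ 2 * ‖x‖ := by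
      rw [hT1, Real.norm_eq_abs]
      calc |g₂ x| ≤ ‖g₂‖ * ‖x‖ := g₂.le_opNorm x
      _ ≤ 2 * ‖x‖ := by
          apply mul_le_mul_of_nonneg_right hg₂norm (norm_nonneg x)
    have hsum : ∑ i, ‖(T x) i‖ ^ 2 ≤ (3 * ‖x‖) ^ 2 := by
      rw [Fin.sum_univ_two]
      nlinarith [norm_nonneg ((T x) 0), norm_nonneg ((T x) 1), norm_nonneg x]
    calc Real.sqrt (∑ i, ‖(T x) i‖ ^ 2) ≤ Real.sqrt ((3 * ‖x‖) ^ 2) :=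
      Real.sqrt_le_sqrt hsum
    _ = 3 * ‖x‖ := Real.sqrt_sq (by positivity)
  have hTsymmbound : ‖T.symm.toContinuousLinearMap‖ ≤ 2 := by
    apply ContinuousLinearMap.opNorm_le_bound _ (by norm_num)
    intro y
    show ‖T.symm y‖ ≤ 2 * ‖y‖
    rw [hTsymm, hMapp]
    calc ‖y 0 • x₁ + y 1 • x₂‖ ≤ ‖y 0 • x₁‖ + ‖y 1 • x₂‖ := norm_add_le _ _
    _ = |y 0| + |y 1| := by rw [norm_smul, norm_smul, hx₁, hx₂, Real.norm_eq_abs,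
        Real.norm_eq_abs, mul_one, mul_one]
    _ ≤ ‖y‖ + ‖y‖ := add_le_add (coord_le_norm y 0) (coord_le_norm y 1)
    _ = 2 * ‖y‖ := by ring
  calc ‖T.toContinuousLinearMap‖ * ‖T.symm.toContinuousLinearMap‖ ≤ 3 * 2 :=
    mul_le_mul hTbound hTsymmbound (norm_nonneg _) (by norm_num)
  _ = 6 := by norm_num

set_option maxHeartbeats 1000000 in
/-- Stern: projection bound `‖I − P‖ ≤ min(1 + ‖P‖⁻¹, δ_{Y,2}²)‖P‖`. -/
theorem stmt_6 (Y : Type*) [NormedAddCommGroup Y] [NormedSpace ℝ Y]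
    (P : Y →L[ℝ] Y) (hidem : ∀ x, P (P x) = P x) (hP0 : P ≠ 0)
    (hfin : FiniteDimensional ℝ (LinearMap.range P.toLinearMap)) :
    ‖ContinuousLinearMap.id ℝ Y - P‖ ≤ min (1 + ‖P‖⁻¹) ((deltaBM Y 2) ^ 2) * ‖P‖ := by
  classical
  have hPpos : (0:ℝ) < ‖P‖ := norm_pos_iff.mpr hP0
  obtain ⟨w₀, hw₀⟩ : ∃ w : Y, P w ≠ 0 := by
    by_contra h
    push_neg at h
    exact hP0 (by ext z; simpa using h z)
  have hnt : Nontrivial Y := ⟨P w₀, 0, hw₀⟩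
  set δ : ℝ := deltaBM Y 2 with hδdef
  have hδ0 : 0 ≤ δ := by
    apply Real.iSup_nonneg
    intro W
    exact Real.iInf_nonneg fun T => by positivity
  have hbdd : BddAbove (Set.range (fun W : {W : Submodule ℝ Y // Module.finrank ℝ W = 2} =>
      ⨅ T : (W.1 ≃L[ℝ] EuclideanSpace ℝ (Fin 2)),
        ‖T.toContinuousLinearMap‖ * ‖T.symm.toContinuousLinearMap‖)) := by
    refine ⟨6, ?_⟩
    rintro r ⟨W, rfl⟩
    obtain ⟨T₀, hT₀⟩ := exists_T W.2
    exact le_trans (ciInf_le ⟨0, by rintro s ⟨T, rfl⟩; positivity⟩ T₀) hT₀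
  have hone : ‖ContinuousLinearMap.id ℝ Y - P‖ ≤ (1 + ‖P‖⁻¹) * ‖P‖ := by
    calc ‖ContinuousLinearMap.id ℝ Y - P‖ ≤ ‖ContinuousLinearMap.id ℝ Y‖ + ‖P‖ :=
      norm_sub_le _ _
    _ = 1 + ‖P‖ := by rw [ContinuousLinearMap.norm_id]
    _ = (1 + ‖P‖⁻¹) * ‖P‖ := by
        rw [add_mul, one_mul, inv_mul_cancel₀ hPpos.ne', add_comm]
  have hhard : ‖ContinuousLinearMap.id ℝ Y - P‖ ≤ δ ^ 2 * ‖P‖ := by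
    apply ContinuousLinearMap.opNorm_le_bound _ (by positivity)
    intro x
    have happ : (ContinuousLinearMap.id ℝ Y - P) x = x - P x := by
      simp [ContinuousLinearMap.sub_apply]
    rw [happ]
    by_cases hxP : x - P x = 0
    · rw [hxP, norm_zero]; positivity
    have hx0 : x ≠ 0 := by intro h; apply hxP; rw [h]; simp
    obtain ⟨u, hu0, hPu, hxmem⟩ :
        ∃ u : Y, u ≠ 0 ∧ P u = u ∧ x ∈ Submodule.span ℝ {u, x - P x} := by
      by_cases hPx : P x = 0
      · exact ⟨P w₀, hw₀, hidem w₀, Submodule.mem_span_pair.mpr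
          ⟨0, 1, by rw [hPx]; simp⟩⟩
      · exact ⟨P x, hPx, hidem x, Submodule.mem_span_pair.mpr ⟨1, 1, by simp⟩⟩
    set v : Y := x - P x with hvdef
    have hv0 : v ≠ 0 := hxP
    have hPv : P v = 0 := by rw [hvdef, map_sub, hidem, sub_self]
    set Z : Submodule ℝ Y := Submodule.span ℝ {u, v} with hZdef
    have huZ : u ∈ Z := Submodule.subset_span (Set.mem_insert _ _)
    have hvZ : v ∈ Z := Submodule.subset_span (Set.mem_insert_of_mem _ rfl)
    have hindep : LinearIndependent ℝ ![u, v] := by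
      rw [LinearIndependent.pair_iff]
      intro s t hst
      have h1 : s • u = 0 := by
        have := congrArg P hst
        simpa [map_add, _root_.map_smul, hPu, hPv] using this
      have hs : s = 0 := (smul_eq_zero.mp h1).resolve_right hu0
      refine ⟨hs, ?_⟩
      rw [hs, zero_smul, zero_add] at hst
      exact (smul_eq_zero.mp hst).resolve_right hv0
    have hZ2 : Module.finrank ℝ Z = 2 := by
      have h := finrank_span_eq_card hindep
      have hset : Set.range ![u, v] = {u, v} := by
        simp only [Matrix.range_cons, Matrix.range_empty, Set.union_empty,
          Set.union_singleton]
        exact Set.pair_comm v u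
      rw [hset] at h
      rw [hZdef, h, Fintype.card_fin]
    have hfinZ : FiniteDimensional ℝ Z := Module.finite_of_finrank_eq_succ hZ2
    have hPZmaps : ∀ z ∈ Z, P z ∈ Z := by
      intro z hz
      obtain ⟨a, b, hab⟩ := Submodule.mem_span_pair.mp hz
      have h : P z = a • u := by
        rw [← hab, map_add, _root_.map_smul, _root_.map_smul, hPu, hPv, smul_zero, add_zero]
      rw [h]
      exact Z.smul_mem a huZ
    set PZ : Z →L[ℝ] Z :=
      LinearMap.toContinuousLinearMap ((P.toLinearMap).restrict hPZmaps) with hPZdef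
    have hPZapp : ∀ z : Z, (PZ z : Y) = P (z : Y) := fun z => rfl
    have hPZnorm : ‖PZ‖ ≤ ‖P‖ := by
      apply ContinuousLinearMap.opNorm_le_bound _ (norm_nonneg P)
      intro z
      have h1 : ‖PZ z‖ = ‖P (z : Y)‖ := by rw [← hPZapp]; rfl
      have h2 : ‖z‖ = ‖(z : Y)‖ := rfl
      rw [h1, h2]
      exact P.le_opNorm (z : Y)
    set u' : Z := ⟨u, huZ⟩ with hu'def
    set v' : Z := ⟨v, hvZ⟩ with hv'def
    set x' : Z := ⟨x, hxmem⟩ with hx'def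
    have hPZu : PZ u' = u' := Subtype.ext (by rw [hPZapp]; exact hPu)
    have hPZv : PZ v' = 0 := Subtype.ext (by rw [hPZapp]; exact hPv)
    have hTbound : ∀ T : (Z ≃L[ℝ] EuclideanSpace ℝ (Fin 2)),
        ‖x - P x‖ ≤ (‖T.toContinuousLinearMap‖ * ‖T.symm.toContinuousLinearMap‖) ^ 2 *
          (‖P‖ * ‖x‖) := by
      intro T
      set Q : EuclideanSpace ℝ (Fin 2) →L[ℝ] EuclideanSpace ℝ (Fin 2) :=
        (T.toContinuousLinearMap.comp PZ).comp T.symm.toContinuousLinearMap with hQdef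
      have hQapp : ∀ y, Q y = T (PZ (T.symm y)) := fun y => rfl
      have hQu : Q (T u') = T u' := by rw [hQapp, T.symm_apply_apply, hPZu]
      have hQv : Q (T v') = 0 := by rw [hQapp, T.symm_apply_apply, hPZv, map_zero]
      have hTu0 : T u' ≠ 0 := by
        intro h
        apply hu0
        have : u' = 0 := by
          have := congrArg T.symm h
          rwa [T.symm_apply_apply, map_zero] at this
        exact congrArg Subtype.val this
      have hTv0 : T v' ≠ 0 := by
        intro h
        apply hv0
        have : v' = 0 := by
          have := congrArg T.symm h
          rwa [T.symm_apply_apply, map_zero] at this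
        exact congrArg Subtype.val this
      have hspan : ∀ y : EuclideanSpace ℝ (Fin 2),
          ∃ a b : ℝ, y = a • (T u') + b • (T v') := by
        intro y
        obtain ⟨a, b, hab⟩ := Submodule.mem_span_pair.mp (T.symm y).2
        refine ⟨a, b, ?_⟩
        have h1 : T.symm y = a • u' + b • v' := Subtype.ext (by
          push_cast
          exact hab.symm)
        calc y = T (T.symm y) := (T.apply_symm_apply y).symm
        _ = a • T u' + b • T v' := by rw [h1, map_add, _root_.map_smul, _root_.map_smul]
      have hkato := kato2 Q (T u') (T v') hTu0 hTv0 hQu hQv hspan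
      have hQnorm : ‖Q‖ ≤ ‖T.toContinuousLinearMap‖ * (‖P‖ * ‖T.symm.toContinuousLinearMap‖) := by
        have c1 := ContinuousLinearMap.opNorm_comp_le
          (T.toContinuousLinearMap.comp PZ) T.symm.toContinuousLinearMap
        have c2 := ContinuousLinearMap.opNorm_comp_le T.toContinuousLinearMap PZ
        nlinarith [norm_nonneg T.toContinuousLinearMap, norm_nonneg T.symm.toContinuousLinearMap,
          norm_nonneg PZ, norm_nonneg P, norm_nonneg (T.toContinuousLinearMap.comp PZ),
          mul_le_mul_of_nonneg_right c2 (norm_nonneg T.symm.toContinuousLinearMap),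
          mul_le_mul_of_nonneg_right hPZnorm (norm_nonneg T.symm.toContinuousLinearMap)]
      have hkey : (x' - PZ x') =
          T.symm ((ContinuousLinearMap.id ℝ (EuclideanSpace ℝ (Fin 2)) - Q) (T x')) := by
        have h1 : (ContinuousLinearMap.id ℝ (EuclideanSpace ℝ (Fin 2)) - Q) (T x')
            = T (x' - PZ x') := by
          rw [ContinuousLinearMap.sub_apply, ContinuousLinearMap.id_apply, hQapp,
            T.symm_apply_apply, map_sub]
        rw [h1, T.symm_apply_apply]
      have hnorm1 : ‖x - P x‖ = ‖x' - PZ x'‖ := by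
        have h1 : ((x' - PZ x' : Z) : Y) = x - P x := by
          push_cast [hPZapp]
          rfl
        rw [← h1]
        rfl
      set w : EuclideanSpace ℝ (Fin 2) :=
        (ContinuousLinearMap.id ℝ (EuclideanSpace ℝ (Fin 2)) - Q) (T x') with hwdef
      have hnorm2 : ‖T.symm w‖ ≤ ‖T.symm.toContinuousLinearMap‖ * ‖w‖ := by
        have h := T.symm.toContinuousLinearMap.le_opNorm w
        rwa [ContinuousLinearEquiv.coe_coe] at h
      have hnorm3 : ‖w‖
          ≤ ‖ContinuousLinearMap.id ℝ (EuclideanSpace ℝ (Fin 2)) - Q‖ * ‖T x'‖ := by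
        rw [hwdef]
        exact ContinuousLinearMap.le_opNorm _ _
      have hnorm4 : ‖T x'‖ ≤ ‖T.toContinuousLinearMap‖ * ‖x‖ := by
        have h1 : ‖x'‖ = ‖x‖ := rfl
        have h := T.toContinuousLinearMap.le_opNorm x'
        rw [ContinuousLinearEquiv.coe_coe] at h
        rwa [h1] at h
      rw [hnorm1, hkey]
      have hA := norm_nonneg T.toContinuousLinearMap
      have hB := norm_nonneg T.symm.toContinuousLinearMap
      have hQn := norm_nonneg Q
      have hIQn := norm_nonneg (ContinuousLinearMap.id ℝ (EuclideanSpace ℝ (Fin 2)) - Q)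
      have hxn := norm_nonneg x
      have hTx := norm_nonneg (T x')
      nlinarith [mul_le_mul_of_nonneg_left hnorm3 hB,
        mul_le_mul_of_nonneg_left hnorm4 (mul_nonneg hB hIQn),
        mul_le_mul_of_nonneg_right hkato (mul_nonneg hB (mul_nonneg hA hxn)),
        mul_le_mul_of_nonneg_right hQnorm (mul_nonneg hB (mul_nonneg hA hxn)),
        norm_nonneg (P)]
    have hZnonempty : Nonempty (Z ≃L[ℝ] EuclideanSpace ℝ (Fin 2)) :=
      ⟨(exists_T hZ2).choose⟩
    have hden : (0:ℝ) < ‖P‖ * ‖x‖ := by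
      have := norm_pos_iff.mpr hx0
      positivity
    set sq : ℝ := Real.sqrt (‖x - P x‖ / (‖P‖ * ‖x‖)) with hsqdef
    have hsT : ∀ T : (Z ≃L[ℝ] EuclideanSpace ℝ (Fin 2)),
        sq ≤ ‖T.toContinuousLinearMap‖ * ‖T.symm.toContinuousLinearMap‖ := by
      intro T
      have h2 : ‖x - P x‖ / (‖P‖ * ‖x‖)
          ≤ (‖T.toContinuousLinearMap‖ * ‖T.symm.toContinuousLinearMap‖) ^ 2 :=
        (div_le_iff₀ hden).mpr (hTbound T)
      calc sq ≤ Real.sqrt ((‖T.toContinuousLinearMap‖ * ‖T.symm.toContinuousLinearMap‖) ^ 2) :=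
        Real.sqrt_le_sqrt h2
      _ = ‖T.toContinuousLinearMap‖ * ‖T.symm.toContinuousLinearMap‖ :=
        Real.sqrt_sq (by positivity)
    have hsδ : sq ≤ δ := by
      refine le_trans (le_ciInf hsT) ?_
      exact le_ciSup hbdd (⟨Z, hZ2⟩ : {W : Submodule ℝ Y // Module.finrank ℝ W = 2})
    have hratio : ‖x - P x‖ / (‖P‖ * ‖x‖) ≤ δ ^ 2 := by
      have h1 : sq ^ 2 = ‖x - P x‖ / (‖P‖ * ‖x‖) :=
        Real.sq_sqrt (by positivity)
      calc ‖x - P x‖ / (‖P‖ * ‖x‖) = sq ^ 2 := h1.symm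
      _ ≤ δ ^ 2 := by
          apply pow_le_pow_left₀ (Real.sqrt_nonneg _) hsδ
    rw [div_le_iff₀ hden] at hratio
    rw [mul_assoc]
    exact hratio
  rw [min_mul_of_nonneg _ _ (norm_nonneg P)]
  exact le_min hone hhard


end
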